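/- For every c > 3^{4/3}/2 and every q ∈ 𝔯 with H_{c,0}(q) = 0, one has v(q)ᵀ 𝓗(q) v(q) > 0, where v(q) = (q₂ + q₂/|q|³, 2q₁ - q₁/|q|³). -/

import Mathlib

set_option maxHeartbeats 1000000


open Matrix

noncomputable section

/-- Euclidean norm of a point of `ℝ²`. -/
def nrm (q : ℝ × ℝ) : ℝ := Real.sqrt (q.1 ^ 2 + q.2 ^ 2)

/-- Hill's region `𝔯`. -/
def HillRegion : Set (ℝ × ℝ) :=
  {q | (3:ℝ) ^ ((4:ℝ)/3) / 2 < 1 / nrm q + (3/2) * q.1 ^ 2 ∧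
       |q.1| < (3:ℝ) ^ (-(1:ℝ)/3) ∧ |q.2| < 2 * (3:ℝ) ^ (-(4:ℝ)/3)}

/-- The Hessian matrix `𝓗(q)` of `H_{c,0}` at `q`. -/
def Hmat (q : ℝ × ℝ) : Matrix (Fin 2) (Fin 2) ℝ :=
  (1 / (nrm q) ^ 5) •
    !![-2 * (nrm q) ^ 5 + (nrm q) ^ 2 - 3 * q.1 ^ 2, -3 * q.1 * q.2;
       -3 * q.1 * q.2, (nrm q) ^ 5 + (nrm q) ^ 2 - 3 * q.2 ^ 2]

/-- The tangent vector `v(q) = (q₂ + q₂/|q|³, 2q₁ - q₁/|q|³)`. -/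
def v (q : ℝ × ℝ) : Fin 2 → ℝ :=
  ![q.2 + q.2 / (nrm q) ^ 3, 2 * q.1 - q.1 / (nrm q) ^ 3]

lemma core_ineq (a b : ℝ) (ha : 0 ≤ a) (hab : a ≤ b) (hb : 3*b < 1)
    (hc : 81*b < (2+3*a)^3) :
    0 < 27*a^2 - 3*a - 24*a*b + 6*a*b^2 + 1 - 3*b^2 - 2*b^3 := by
  nlinarith [sq_nonneg (a-b), sq_nonneg (3*a-1), sq_nonneg (3*b-1),
    mul_nonneg ha (sub_nonneg.2 hab), sq_nonneg a,
    mul_nonneg (mul_nonneg ha ha) ha, sq_nonneg (a+b)]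

/-- Warm-up Lemma: for every `c > 3^{4/3}/2` and every `q ∈ 𝔯` with
`H_{c,0}(q) = -q₁² + (1/2)q₂² - 1/|q| + c = 0`, one has `v(q)ᵀ 𝓗(q) v(q) > 0`. -/
theorem tangential_hessian_positive_p_zero (c : ℝ) (hc : (3:ℝ) ^ ((4:ℝ)/3) / 2 < c)
    (q : ℝ × ℝ) (hq : q ∈ HillRegion)
    (hH : -q.1 ^ 2 + (1/2) * q.2 ^ 2 - 1 / nrm q + c = 0) :
    0 < (v q) ⬝ᵥ (Hmat q).mulVec (v q) := by
  obtain ⟨h1, hx, hy⟩ := hq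
  set x := q.1 with hxdef
  set y := q.2 with hydef
  set r := nrm q with hrdef
  set t : ℝ := (3:ℝ) ^ ((1:ℝ)/3) with htdef
  have ht : 0 < t := Real.rpow_pos_of_pos (by norm_num) _
  have ht3 : t ^ 3 = 3 := by
    rw [htdef, ← Real.rpow_natCast ((3:ℝ) ^ ((1:ℝ)/3)) 3, ← Real.rpow_mul (by norm_num)]
    norm_num
  have ht1 : 1 < t := by
    by_contra h
    push_neg at h
    nlinarith [mul_nonneg (mul_nonneg ht.le ht.le) ht.le, mul_le_one₀ h ht.le h]
  have h43 : (3:ℝ) ^ ((4:ℝ)/3) = 3 * t := by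
    rw [show (4:ℝ)/3 = 1 + 1/3 by norm_num, Real.rpow_add (by norm_num), Real.rpow_one, htdef]
  have hm13 : (3:ℝ) ^ (-(1:ℝ)/3) = 1 / t := by
    rw [show -(1:ℝ)/3 = -(1/3) by norm_num, Real.rpow_neg (by norm_num), ← one_div, htdef]
  rw [hm13] at hx
  have htx : t * |x| < 1 := by
    have := (mul_lt_mul_iff_right₀ ht).2 hx
    rwa [mul_one_div, div_self ht.ne'] at this
  have hx2 : t ^ 2 * x ^ 2 < 1 := by
    have h0 : 0 ≤ t * |x| := mul_nonneg ht.le (abs_nonneg x)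
    have h2 : (t * |x|) ^ 2 < 1 := by nlinarith
    have h3 : (t * |x|) ^ 2 = t ^ 2 * x ^ 2 := by rw [mul_pow, sq_abs]
    linarith
  have hrnn : 0 ≤ r := Real.sqrt_nonneg _
  have hr2 : r ^ 2 = x ^ 2 + y ^ 2 := Real.sq_sqrt (by positivity)
  rw [h43] at h1
  have hr : 0 < r := by
    rcases hrnn.lt_or_eq with h | h
    · exact h
    · exfalso
      rw [← h, div_zero] at h1
      nlinarith
  have hmul : 3 * t * r < 2 + 3 * x ^ 2 * r := by
    have h2 := mul_lt_mul_of_pos_right h1 hr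
    rw [add_mul, one_div, inv_mul_cancel₀ hr.ne'] at h2
    nlinarith
  have h3rt : 3 * r < t ^ 2 := by
    nlinarith [mul_lt_mul_of_pos_right hmul (mul_pos ht ht),
      mul_nonneg (sub_nonneg.2 hx2.le) hr.le]
  have hb : 3 * r ^ 3 < 1 := by
    have h3 := pow_lt_pow_left₀ h3rt (by positivity : (0:ℝ) ≤ 3 * r) (n := 3) (by norm_num)
    nlinarith
  have hcube : 81 * r ^ 3 < (2 + 3 * (x ^ 2 * r)) ^ 3 := by
    have h3 := pow_lt_pow_left₀ hmul (by positivity : (0:ℝ) ≤ 3 * t * r) (n := 3) (by norm_num)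
    have e1 : (3 * t * r) ^ 3 = 27 * t ^ 3 * r ^ 3 := by ring
    rw [e1, ht3] at h3
    calc 81 * r ^ 3 = 27 * 3 * r ^ 3 := by ring
      _ < (2 + 3 * x ^ 2 * r) ^ 3 := h3
      _ = (2 + 3 * (x ^ 2 * r)) ^ 3 := by ring
  have ha0 : 0 ≤ x ^ 2 * r := by positivity
  have hab : x ^ 2 * r ≤ r ^ 3 := by nlinarith [sq_nonneg y]
  have hG := core_ineq (x ^ 2 * r) (r ^ 3) ha0 hab (by linarith) hcube
  have hP : 0 < r ^ 4 - 3 * r ^ 10 - 2 * r ^ 13 - 3 * x ^ 2 * r ^ 5 - 24 * x ^ 2 * r ^ 8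
      + 6 * x ^ 2 * r ^ 11 + 27 * x ^ 4 * r ^ 6 := by
    nlinarith [mul_pos (pow_pos hr 4) hG]
  have hy2 : y ^ 2 = r ^ 2 - x ^ 2 := by linarith
  have hfin : (v q) ⬝ᵥ (Hmat q).mulVec (v q) =
      ((-2 * r ^ 5 + r ^ 2 - 3 * x ^ 2) * y ^ 2 * (r ^ 3 + 1) ^ 2
        - 6 * x ^ 2 * y ^ 2 * (r ^ 3 + 1) * (2 * r ^ 3 - 1)
        + (r ^ 5 + r ^ 2 - 3 * y ^ 2) * x ^ 2 * (2 * r ^ 3 - 1) ^ 2) / r ^ 11 := by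
    simp only [v, Hmat, Matrix.mulVec, dotProduct, Fin.sum_univ_two, Matrix.smul_apply,
      Matrix.cons_val', Matrix.cons_val_zero, Matrix.cons_val_one, Matrix.head_cons,
      Matrix.empty_val', Matrix.cons_val_fin_one, Matrix.head_fin_const, smul_eq_mul, Matrix.of_apply,
      ← hxdef, ← hydef, ← hrdef]
    have hrne : r ≠ 0 := hr.ne'
    field_simp
    ring
  have hnum : (-2 * r ^ 5 + r ^ 2 - 3 * x ^ 2) * y ^ 2 * (r ^ 3 + 1) ^ 2
        - 6 * x ^ 2 * y ^ 2 * (r ^ 3 + 1) * (2 * r ^ 3 - 1)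
        + (r ^ 5 + r ^ 2 - 3 * y ^ 2) * x ^ 2 * (2 * r ^ 3 - 1) ^ 2
      = r ^ 4 - 3 * r ^ 10 - 2 * r ^ 13 - 3 * x ^ 2 * r ^ 5 - 24 * x ^ 2 * r ^ 8
        + 6 * x ^ 2 * r ^ 11 + 27 * x ^ 4 * r ^ 6 := by
    linear_combination ((-2 * r ^ 5 + r ^ 2 - 3 * x ^ 2) * (r ^ 3 + 1) ^ 2
      - 6 * x ^ 2 * (r ^ 3 + 1) * (2 * r ^ 3 - 1)
      - 3 * x ^ 2 * (2 * r ^ 3 - 1) ^ 2) * hy2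
  rw [hfin, hnum]
  exact div_pos hP (pow_pos hr 11)


end
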